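/- Let P = ⊕_{i≥0} P_i be a finite-dimensional nonnegatively graded module over the exterior algebra E = ⋀V*, let L(P) be the associated standard linear free complex over S = Sym(V), and for each i ≥ 0 set N_i = { p ∈ P_i : ω·p = 0 for all ω ∈ ⋀^i V* }. Let M be a finitely generated graded S-module and G_• a minimal graded free resolution of M. If α_• : L(P) → G_• is a morphism of chain complexes of graded S-modules such that α_0 : S ⊗_k P_0 → G_0 is a split monomorphism, then for every i ≥ 0 the rank of the free module G_i is at least dim_k P_i − dim_k N_i. -/

import Mathlib

open MvPolynomial

variable (k : Type) [Field k] (V : Type) [AddCommGroup V] [Module k V]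

/-- The `i`-th exterior power `⋀^i V*`, realized as the `i`-th power of the image of `V*`
inside the exterior algebra `E = ⋀ V*`. -/
noncomputable def wedgePow (i : ℕ) : Submodule k (ExteriorAlgebra k (Module.Dual k V)) :=
  (LinearMap.range (ExteriorAlgebra.ι k (M := Module.Dual k V))) ^ i

variable (P : Type) [AddCommGroup P] [Module k P]
  [Module (ExteriorAlgebra k (Module.Dual k V)) P]
  [IsScalarTower k (ExteriorAlgebra k (Module.Dual k V)) P]
  [SMulCommClass k (ExteriorAlgebra k (Module.Dual k V)) P]

/-- The subspace `{p ∈ P | ω • p = 0 for all ω ∈ ⋀^i V*}` of an `E = ⋀V*`-module `P`. -/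
noncomputable def annWedge (i : ℕ) : Submodule k P where
  carrier := {p : P | ∀ ω ∈ wedgePow k V i, ω • p = 0}
  add_mem' := by
    intro p q hp hq ω hω
    rw [smul_add, hp ω hω, hq ω hω, add_zero]
  zero_mem' := by
    intro ω hω
    rw [smul_zero]
  smul_mem' := by
    intro c p hp ω hω
    rw [← smul_comm c ω p, hp ω hω, smul_zero]


private lemma eq_zero_of_homog_zero {k : Type} [Field k] {n : ℕ}
    {f : MvPolynomial (Fin n) k} (hf : f.IsHomogeneous 0)
    (h0 : constantCoeff f = 0) : f = 0 := by
  ext d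
  rw [MvPolynomial.coeff_zero]
  by_cases hd : d = 0
  · subst hd
    rw [MvPolynomial.constantCoeff_eq] at h0
    exact h0
  · exact hf.coeff_eq_zero (by simpa [Finsupp.degree_eq_zero_iff] using hd)

lemma mem_annWedge (k : Type) [Field k] (V : Type) [AddCommGroup V] [Module k V]
    (P : Type) [AddCommGroup P] [Module k P]
    [Module (ExteriorAlgebra k (Module.Dual k V)) P]
    [IsScalarTower k (ExteriorAlgebra k (Module.Dual k V)) P]
    [SMulCommClass k (ExteriorAlgebra k (Module.Dual k V)) P]
    {i : ℕ} {p : P} :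
    p ∈ annWedge k V P i ↔ ∀ ω ∈ wedgePow k V i, ω • p = 0 := Iff.rfl

set_option maxHeartbeats 2000000 in
/-- Let `P = ⊕_{i ≥ 0} Pgr i` be a finite-dimensional nonnegatively
graded module over the exterior algebra `E = ⋀V*`, where `V` has basis `xB` indexed by
`Fin n`, and set `N_i = Pgr i ⊓ annWedge i = {p ∈ P_i | ⋀^i V* · p = 0}`.  Identify
`S = Sym(V)` with `MvPolynomial (Fin n) k` via `xB`.  Let `G_•` be a minimal graded free
resolution of a finitely generated graded `S`-module `M` (encoded by ranks `b i`,
generator degrees `degG i`, and differential matrices `N i` which are homogeneous of the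
appropriate degrees, minimal, and exact in positive homological degrees; `M` is the
cokernel of `N 0`).  A morphism of chain complexes of graded `S`-modules
`α_• : L(P) → G_•` is encoded by `k`-linear maps `αk i : Pgr i → G_i` recording the images
of the degree-`i` generators of `L(P)_i = S ⊗ Pgr i`; these images are homogeneous of the
appropriate degrees and satisfy the chain-map condition coming from the differential
`1 ⊗ p ↦ ∑ⱼ xⱼ ⊗ eⱼ • p` of `L(P)`.  If `α_0 : S ⊗ Pgr 0 → G_0` is a split monomorphism
(its matrix has a left inverse over `S`), then
`rank G_i = b i ≥ dim_k (Pgr i) - dim_k N_i` for every `i`. -/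
theorem rank_of_minimal_resolution_ge_irredundant_quotient
    [FiniteDimensional k V] [FiniteDimensional k P]
    (n : ℕ) (xB : Module.Basis (Fin n) k V)
    (Pgr : ℕ → Submodule k P)
    (hdirect : DirectSum.IsInternal Pgr)
    (hact : ∀ (i : ℕ) (e : Module.Dual k V), ∀ p ∈ Pgr (i + 1),
      ExteriorAlgebra.ι k e • p ∈ Pgr i)
    (hzero : ∀ (e : Module.Dual k V), ∀ p ∈ Pgr 0, ExteriorAlgebra.ι k e • p = 0)
    -- the minimal graded free resolution G
    (b : ℕ → ℕ) (degG : ∀ i : ℕ, Fin (b i) → ℤ)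
    (N : ∀ i : ℕ, Matrix (Fin (b i)) (Fin (b (i + 1))) (MvPolynomial (Fin n) k))
    (hNhom : ∀ (i : ℕ) (x : Fin (b i)) (y : Fin (b (i + 1))),
      (N i x y).IsHomogeneous (degG (i + 1) y - degG i x).toNat
        ∧ (degG (i + 1) y - degG i x < 0 → N i x y = 0))
    (hNmin : ∀ (i : ℕ) (x : Fin (b i)) (y : Fin (b (i + 1))), constantCoeff (N i x y) = 0)
    (hNcx : ∀ i : ℕ, N i * N (i + 1) = 0)
    (hexact : ∀ i : ℕ,
      LinearMap.range (N (i + 1)).mulVecLin = LinearMap.ker (N i).mulVecLin)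
    -- the morphism of chain complexes of graded S-modules α : L(P) → G
    (αk : ∀ i : ℕ, Pgr i →ₗ[k] (Fin (b i) → MvPolynomial (Fin n) k))
    (hαhom : ∀ (i : ℕ) (p : Pgr i) (l : Fin (b i)),
      (αk i p l).IsHomogeneous ((i : ℤ) - degG i l).toNat
        ∧ ((i : ℤ) - degG i l < 0 → αk i p l = 0))
    (hαchain : ∀ (i : ℕ) (p : Pgr (i + 1)),
      (N i).mulVec (αk (i + 1) p)
        = ∑ j : Fin n, (MvPolynomial.X j : MvPolynomial (Fin n) k) •
            αk i ⟨ExteriorAlgebra.ι k (xB.dualBasis j) • (p : P),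
              hact i (xB.dualBasis j) (p : P) p.2⟩)
    -- α_0 is a split monomorphism
    (hsplit0 : ∃ B : Matrix (Fin (Module.finrank k (Pgr 0))) (Fin (b 0))
        (MvPolynomial (Fin n) k),
      B * (Matrix.of fun (l : Fin (b 0)) (j : Fin (Module.finrank k (Pgr 0))) =>
        αk 0 (Module.finBasis k (Pgr 0) j) l) = 1) :
    ∀ i : ℕ,
      Module.finrank k (Pgr i) - Module.finrank k (Pgr i ⊓ annWedge k V P i : Submodule k P)
        ≤ b i := by
  classical
  -- `constantCoeff` as a `k`-linear map
  let cc : MvPolynomial (Fin n) k →ₗ[k] k :=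
    { toFun := constantCoeff
      map_add' := fun a b => map_add _ a b
      map_smul' := fun c f => by
        simp [MvPolynomial.smul_eq_C_mul] }
  -- Key claim: if all constant coefficients of `αk i p` vanish, then `p ∈ annWedge i`.
  have key : ∀ (i : ℕ) (p : Pgr i), (∀ l, constantCoeff (αk i p l) = 0) →
      (p : P) ∈ annWedge k V P i := by
    intro i
    induction i with
    | zero =>
      intro p hp
      have hp0 : p = 0 := by
        obtain ⟨B, hB⟩ := hsplit0
        have hBA : B.map constantCoeff
            * (Matrix.of fun (l : Fin (b 0)) (j : Fin (Module.finrank k (Pgr 0))) =>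
                αk 0 (Module.finBasis k (Pgr 0) j) l).map constantCoeff = 1 := by
          rw [← Matrix.map_mul, hB,
            Matrix.map_one _ (map_zero constantCoeff) (map_one constantCoeff)]
        set β := Module.finBasis k (Pgr 0) with hβ
        set v : Fin (Module.finrank k (Pgr 0)) → k := fun j => β.repr p j with hv
        have hAv : ((Matrix.of fun (l : Fin (b 0)) (j : Fin (Module.finrank k (Pgr 0))) =>
            αk 0 (β j) l).map constantCoeff).mulVec v = 0 := by
          funext l
          have hrepr : αk 0 p l = ∑ j, v j • αk 0 (β j) l := by
            conv_lhs => rw [← β.sum_repr p]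
            rw [map_sum]
            simp [Finset.sum_apply, hv]
          have h0 := hp l
          rw [hrepr] at h0
          simp only [map_sum] at h0
          simpa [Matrix.mulVec, dotProduct, Matrix.map_apply,
            MvPolynomial.smul_eq_C_mul, mul_comm] using h0
        have hv0 : v = 0 := by
          calc v = (1 : Matrix (Fin (Module.finrank k (Pgr 0)))
                (Fin (Module.finrank k (Pgr 0))) k).mulVec v := (Matrix.one_mulVec v).symm
          _ = (B.map constantCoeff).mulVec (((Matrix.of
                fun (l : Fin (b 0)) (j : Fin (Module.finrank k (Pgr 0))) =>
                  αk 0 (β j) l).map constantCoeff).mulVec v) := by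
              rw [← hBA, ← Matrix.mulVec_mulVec]
          _ = 0 := by rw [hAv, Matrix.mulVec_zero]
        have hr : β.repr p = 0 := by
          ext j
          exact congrFun hv0 j
        exact β.repr.map_eq_zero_iff.mp hr
      rw [hp0]
      simpa using (annWedge k V P 0).zero_mem
    | succ i ih =>
      intro p hp
      -- Step A: all constant coefficients of the boundary images vanish
      have hq : ∀ (j : Fin n) (l : Fin (b i)),
          constantCoeff (αk i ⟨ExteriorAlgebra.ι k (xB.dualBasis j) • (p : P),
            hact i (xB.dualBasis j) (p : P) p.2⟩ l) = 0 := by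
        intro j l
        have hchain := congrFun (hαchain i p) l
        have hL : MvPolynomial.coeff (Finsupp.single j 1)
            ((N i).mulVec (αk (i+1) p) l) = 0 := by
          simp only [Matrix.mulVec, dotProduct]
          rw [MvPolynomial.coeff_sum]
          apply Finset.sum_eq_zero
          intro y _
          rcases lt_or_ge (degG (i+1) y - degG i l) 0 with hneg | hposa
          · rw [(hNhom i l y).2 hneg, zero_mul, MvPolynomial.coeff_zero]
          rcases lt_or_ge (((i+1 : ℕ) : ℤ) - degG (i+1) y) 0 with hneg | hposb
          · rw [(hαhom (i+1) p y).2 hneg, mul_zero, MvPolynomial.coeff_zero]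
          by_cases hD : (degG (i+1) y - degG i l).toNat
              + (((i+1 : ℕ) : ℤ) - degG (i+1) y).toNat = 1
          · rcases (by omega :
                (degG (i+1) y - degG i l).toNat = 0
                  ∧ (((i+1 : ℕ) : ℤ) - degG (i+1) y).toNat = 1
                ∨ (degG (i+1) y - degG i l).toNat = 1
                  ∧ (((i+1 : ℕ) : ℤ) - degG (i+1) y).toNat = 0) with
              ⟨h1, _⟩ | ⟨_, h2⟩
            · have hz : N i l y = 0 :=
                eq_zero_of_homog_zero (h1 ▸ (hNhom i l y).1) (hNmin i l y)
              rw [hz, zero_mul, MvPolynomial.coeff_zero]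
            · have hz : αk (i+1) p y = 0 :=
                eq_zero_of_homog_zero (h2 ▸ (hαhom (i+1) p y).1) (hp y)
              rw [hz, mul_zero, MvPolynomial.coeff_zero]
          · refine ((hNhom i l y).1.mul (hαhom (i+1) p y).1).coeff_eq_zero ?_
            have hdeg : (Finsupp.single j 1).degree = 1 := by
              exact Finsupp.degree_single j 1
            rw [hdeg]
            omega
        rw [hchain] at hL
        simp only [Finset.sum_apply, MvPolynomial.coeff_sum] at hL
        rw [Finset.sum_eq_single j] at hL
        · simpa [MvPolynomial.coeff_X_mul', Finsupp.support_single_ne_zero,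
            MvPolynomial.constantCoeff_eq] using hL
        · intro j' _ hne
          simp [MvPolynomial.coeff_X_mul', Finsupp.support_single_ne_zero,
            Finsupp.single_eq_of_ne (Ne.symm hne), hne]
        · intro h
          exact absurd (Finset.mem_univ j) h
      -- Step B: `ι e • p ∈ N_i` for every `e`
      have hmem : ∀ e : Module.Dual k V,
          ExteriorAlgebra.ι k e • (p : P) ∈ Pgr i ⊓ annWedge k V P i := by
        let L : Module.Dual k V →ₗ[k] P :=
          { toFun := fun e => ExteriorAlgebra.ι k e • (p : P)
            map_add' := fun e e' => by simp only [map_add, add_smul]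
            map_smul' := fun c e => by
              simp only [map_smul, smul_assoc, RingHom.id_apply] }
        have hle : (⊤ : Submodule k (Module.Dual k V))
            ≤ Submodule.comap L (Pgr i ⊓ annWedge k V P i) := by
          rw [← xB.dualBasis.span_eq, Submodule.span_le]
          rintro _ ⟨j, rfl⟩
          exact ⟨hact i _ _ p.2, ih ⟨_, hact i (xB.dualBasis j) (p : P) p.2⟩ (hq j)⟩
        intro e
        exact hle (Submodule.mem_top (x := e))
      -- Step C: conclude using `pow_succ`
      rw [mem_annWedge]
      intro ω hω
      have hω' : ω ∈ wedgePow k V i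
          * LinearMap.range (ExteriorAlgebra.ι k (M := Module.Dual k V)) := by
        rw [wedgePow, pow_succ] at hω
        exact hω
      refine Submodule.mul_induction_on hω' ?_ ?_
      · rintro m hm _ ⟨e, rfl⟩
        rw [mul_smul]
        exact (hmem e).2 m hm
      · intro x y hx hy
        rw [add_smul, hx, hy, add_zero]
  -- dimension count
  intro i
  let φ : (Pgr i) →ₗ[k] (Fin (b i) → k) :=
    (LinearMap.pi fun l => cc ∘ₗ LinearMap.proj l) ∘ₗ αk i
  have hker : LinearMap.ker φ
      ≤ Submodule.comap (Pgr i).subtype (Pgr i ⊓ annWedge k V P i) := by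
    intro p hp
    have hp' : ∀ l, constantCoeff (αk i p l) = 0 := by
      intro l
      have := congrFun (LinearMap.mem_ker.mp hp) l
      simpa [φ, cc] using this
    exact ⟨p.2, key i p hp'⟩
  have e1 : Module.finrank k
        (Submodule.comap (Pgr i).subtype (Pgr i ⊓ annWedge k V P i))
      = Module.finrank k (Pgr i ⊓ annWedge k V P i : Submodule k P) :=
    LinearEquiv.finrank_eq (Submodule.comapSubtypeEquivOfLe inf_le_left)
  have h1 : Module.finrank k (LinearMap.ker φ)
      ≤ Module.finrank k (Pgr i ⊓ annWedge k V P i : Submodule k P) := by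
    rw [← e1]
    exact Submodule.finrank_mono hker
  have h2 : Module.finrank k (LinearMap.range φ) ≤ b i := by
    have h := Submodule.finrank_le (LinearMap.range φ)
    simpa using h
  have h3 := LinearMap.finrank_range_add_finrank_ker φ
  omega
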